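/- Let V be a right-right Yetter–Drinfeld module over H. Then the map θ_V(v) = v₍₀₎ ◁ S(v₍₁₎) is colinear up to a twist by S²: ρ(θ_V(v)) = θ_V(v₍₀₎) ⊗ S²(v₍₁₎) for all v ∈ V. -/

import Mathlib

open TensorProduct LinearMap HopfAlgebra Coalgebra

section ConvSection

variable {k : Type*} [CommRing k] {C : Type*} [AddCommGroup C] [Module k C] [Coalgebra k C]
variable {B : Type*} [Ring B] [Algebra k B]

/-- Convolution product on linear maps from a coalgebra to an algebra. -/
noncomputable def myconv (f g : C →ₗ[k] B) : C →ₗ[k] B :=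
  LinearMap.mul' k B ∘ₗ TensorProduct.map f g ∘ₗ Coalgebra.comul

lemma myconv_apply_repr (f g : C →ₗ[k] B) {x : C} {ι : Type*} {s : Finset ι} {l r : ι → C}
    (h : Coalgebra.comul (R := k) x = ∑ i ∈ s, l i ⊗ₜ[k] r i) :
    myconv f g x = ∑ i ∈ s, f (l i) * g (r i) := by
  simp [myconv, h, map_sum]

lemma myconv_one_right (f : C →ₗ[k] B) :
    myconv f (Algebra.linearMap k B ∘ₗ Coalgebra.counit) = f := by
  apply LinearMap.ext; intro x
  set r := ℛ k x with hr
  have hx : ∑ i ∈ r.index, Coalgebra.counit (R := k) (r.right i) • r.left i = x := by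
    have h := congrArg (TensorProduct.rid k C) (Coalgebra.sum_tmul_counit_eq r)
    rw [map_sum] at h
    simp only [TensorProduct.rid_tmul, one_smul] at h
    exact h
  rw [myconv_apply_repr f _ r.eq.symm]
  calc ∑ i ∈ r.index, f (r.left i) * (Algebra.linearMap k B ∘ₗ Coalgebra.counit) (r.right i)
      = ∑ i ∈ r.index, Coalgebra.counit (R := k) (r.right i) • f (r.left i) := by
        refine Finset.sum_congr rfl fun i _ => ?_
        simp [Algebra.linearMap_apply, ← Algebra.commutes, Algebra.smul_def]
    _ = f (∑ i ∈ r.index, Coalgebra.counit (R := k) (r.right i) • r.left i) := by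
        rw [map_sum]; simp only [map_smul]
    _ = f x := by rw [hx]

lemma myconv_one_left (f : C →ₗ[k] B) :
    myconv (Algebra.linearMap k B ∘ₗ Coalgebra.counit) f = f := by
  apply LinearMap.ext; intro x
  set r := ℛ k x with hr
  have hx : ∑ i ∈ r.index, Coalgebra.counit (R := k) (r.left i) • r.right i = x := by
    have h := congrArg (TensorProduct.lid k C) (Coalgebra.sum_counit_tmul_eq r)
    rw [map_sum] at h
    simp only [TensorProduct.lid_tmul, one_smul] at h
    exact h
  rw [myconv_apply_repr _ f r.eq.symm]
  calc ∑ i ∈ r.index, (Algebra.linearMap k B ∘ₗ Coalgebra.counit) (r.left i) * f (r.right i)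
      = ∑ i ∈ r.index, Coalgebra.counit (R := k) (r.left i) • f (r.right i) := by
        refine Finset.sum_congr rfl fun i _ => ?_
        simp [Algebra.linearMap_apply, Algebra.smul_def]
    _ = f (∑ i ∈ r.index, Coalgebra.counit (R := k) (r.left i) • r.right i) := by
        rw [map_sum]; simp only [map_smul]
    _ = f x := by rw [hx]

lemma myconv_assoc (f g h : C →ₗ[k] B) :
    myconv (myconv f g) h = myconv f (myconv g h) := by
  apply LinearMap.ext; intro x
  set r := ℛ k x with hr
  set a₁ : (i : C × C) → Coalgebra.Repr k (r.left i) (C × C) := fun i => ℛ k (r.left i) with ha₁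
  set a₂ : (i : C × C) → Coalgebra.Repr k (r.right i) (C × C) := fun i => ℛ k (r.right i) with ha₂
  have key := Coalgebra.sum_map_tmul_tmul_eq (R := k) f g h x (repr := r) (a₁ := a₁) (a₂ := a₂)
  have key2 := congrArg (LinearMap.mul' k B ∘ₗ LinearMap.lTensor B (LinearMap.mul' k B)) key
  simp only [map_sum, comp_apply, lTensor_tmul, mul'_apply] at key2
  have l1 : myconv (myconv f g) h x
      = ∑ i ∈ r.index, ∑ j ∈ (a₁ i).index,
          f ((a₁ i).left j) * (g ((a₁ i).right j) * h (r.right i)) := by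
    rw [myconv_apply_repr _ h r.eq.symm]
    refine Finset.sum_congr rfl fun i _ => ?_
    rw [myconv_apply_repr f g (a₁ i).eq.symm, Finset.sum_mul]
    exact Finset.sum_congr rfl fun j _ => by rw [mul_assoc]
  have l2 : myconv f (myconv g h) x
      = ∑ i ∈ r.index, ∑ j ∈ (a₂ i).index,
          f (r.left i) * (g ((a₂ i).left j) * h ((a₂ i).right j)) := by
    rw [myconv_apply_repr f _ r.eq.symm]
    refine Finset.sum_congr rfl fun i _ => ?_
    rw [myconv_apply_repr g h (a₂ i).eq.symm, Finset.mul_sum]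
  rw [l1, l2, ← key2]

end ConvSection

section HopfSection

variable {k : Type*} [CommRing k] {H : Type*} [Ring H] [HopfAlgebra k H]

local notation "S" => (HopfAlgebra.antipode (R := k) (A := H))
local notation "Δ" => (Coalgebra.comul (R := k) (A := H))

/-- The antipode is an anti-coalgebra morphism (pointwise form). -/
lemma my_comul_antipode (a : H) :
    Coalgebra.comul (R := k) (HopfAlgebra.antipode (R := k) (A := H) a)
      = TensorProduct.map S S ((TensorProduct.comm k H H) (Coalgebra.comul a)) := by
  -- convolution-inverse uniqueness argument
  set ι₁ : H →ₗ[k] H ⊗[k] H := (TensorProduct.mk k H H).flip 1 with hι₁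
  set ι₂ : H →ₗ[k] H ⊗[k] H := TensorProduct.mk k H H 1 with hι₂
  set p : H →ₗ[k] H ⊗[k] H := ι₂ ∘ₗ S with hp
  set q : H →ₗ[k] H ⊗[k] H := ι₁ ∘ₗ S with hq
  set u : H →ₗ[k] H ⊗[k] H := Algebra.linearMap k (H ⊗[k] H) ∘ₗ Coalgebra.counit with hu
  set c : H →ₗ[k] H ⊗[k] H :=
    TensorProduct.map S S ∘ₗ (TensorProduct.comm k H H).toLinearMap ∘ₗ Coalgebra.comul with hc
  have h1 : myconv ι₁ ι₂ = Coalgebra.comul := by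
    apply LinearMap.ext; intro x
    set r := ℛ k x
    rw [myconv_apply_repr _ _ r.eq.symm, ← r.eq]
    refine Finset.sum_congr rfl fun i _ => ?_
    simp [hι₁, hι₂, Algebra.TensorProduct.tmul_mul_tmul]
  have h2 : myconv q ι₁ = u := by
    apply LinearMap.ext; intro x
    set r := ℛ k x
    rw [myconv_apply_repr _ _ r.eq.symm]
    have : ∑ i ∈ r.index, q (r.left i) * ι₁ (r.right i)
        = (∑ i ∈ r.index, S (r.left i) * r.right i) ⊗ₜ[k] 1 := by
      rw [sum_tmul]
      refine Finset.sum_congr rfl fun i _ => ?_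
      simp [hq, hι₁, Algebra.TensorProduct.tmul_mul_tmul]
    rw [this, HopfAlgebra.sum_antipode_mul_eq_algebraMap_counit r]
    simp [hu, Algebra.TensorProduct.algebraMap_apply]
  have h3 : myconv p ι₂ = u := by
    apply LinearMap.ext; intro x
    set r := ℛ k x
    rw [myconv_apply_repr _ _ r.eq.symm]
    have : ∑ i ∈ r.index, p (r.left i) * ι₂ (r.right i)
        = (1 : H) ⊗ₜ[k] (∑ i ∈ r.index, S (r.left i) * r.right i) := by
      rw [tmul_sum]
      refine Finset.sum_congr rfl fun i _ => ?_
      simp [hp, hι₂, Algebra.TensorProduct.tmul_mul_tmul]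
    rw [this, HopfAlgebra.sum_antipode_mul_eq_algebraMap_counit r]
    simp [hu, Algebra.TensorProduct.algebraMap_apply, Algebra.algebraMap_eq_smul_one,
      TensorProduct.tmul_smul, TensorProduct.smul_tmul', Algebra.TensorProduct.one_def]
  have h4 : myconv p q = c := by
    apply LinearMap.ext; intro x
    set r := ℛ k x
    rw [myconv_apply_repr _ _ r.eq.symm]
    have : c x = ∑ i ∈ r.index, S (r.right i) ⊗ₜ[k] S (r.left i) := by
      simp [hc, ← r.eq, map_sum]
    rw [this]
    refine Finset.sum_congr rfl fun i _ => ?_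
    simp [hp, hq, hι₁, hι₂, Algebra.TensorProduct.tmul_mul_tmul]
  have h6 : myconv Δ (Δ ∘ₗ S) = u := by
    apply LinearMap.ext; intro x
    set r := ℛ k x
    rw [myconv_apply_repr _ _ r.eq.symm]
    have : ∑ i ∈ r.index, Δ (r.left i) * (Δ ∘ₗ S) (r.right i)
        = Coalgebra.comul (R := k) (∑ i ∈ r.index, r.left i * S (r.right i)) := by
      rw [map_sum]
      refine Finset.sum_congr rfl fun i _ => ?_
      simp [Bialgebra.comul_mul]
    rw [this, HopfAlgebra.sum_mul_antipode_eq_algebraMap_counit r]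
    simp [hu]
  have hcΔ : myconv c Coalgebra.comul = u := by
    calc myconv c Coalgebra.comul = myconv (myconv p q) (myconv ι₁ ι₂) := by rw [h4, h1]
      _ = myconv p (myconv q (myconv ι₁ ι₂)) := myconv_assoc _ _ _
      _ = myconv p (myconv (myconv q ι₁) ι₂) := by rw [myconv_assoc]
      _ = myconv p ι₂ := by rw [h2, hu, myconv_one_left]
      _ = u := h3
  have h7 : (Coalgebra.comul ∘ₗ S : H →ₗ[k] H ⊗[k] H) = c := by
    calc (Coalgebra.comul ∘ₗ S : H →ₗ[k] H ⊗[k] H)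
        = myconv (Algebra.linearMap k (H ⊗[k] H) ∘ₗ Coalgebra.counit) (Coalgebra.comul ∘ₗ S) :=
          (myconv_one_left _).symm
      _ = myconv u (Coalgebra.comul ∘ₗ S) := by rw [← hu]
      _ = myconv (myconv c Coalgebra.comul) (Coalgebra.comul ∘ₗ S) := by rw [hcΔ]
      _ = myconv c (myconv Coalgebra.comul (Coalgebra.comul ∘ₗ S)) := myconv_assoc _ _ _
      _ = myconv c u := by rw [h6]
      _ = c := by rw [hu, myconv_one_right]
  have h8 := LinearMap.congr_fun h7 a
  simpa [hc] using h8

end HopfSection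
section Part2

variable {k : Type*} [CommRing k] {H : Type*} [Ring H] [HopfAlgebra k H]

local notation "S°" => (HopfAlgebra.antipode (R := k) (A := H))

/-- The `W` reshuffling map: `x ⊗ (y ⊗ z) ↦ S y ⊗ (S² z ⊗ S x)`. -/
noncomputable def Wc : H ⊗[k] (H ⊗[k] H) →ₗ[k] H ⊗[k] (H ⊗[k] H) :=
  TensorProduct.map (HopfAlgebra.antipode (R := k))
      (TensorProduct.map (HopfAlgebra.antipode (R := k) ∘ₗ HopfAlgebra.antipode (R := k))
        (HopfAlgebra.antipode (R := k)))
    ∘ₗ (TensorProduct.assoc k H H H).toLinearMap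
    ∘ₗ (TensorProduct.comm k H (H ⊗[k] H)).toLinearMap

lemma Wc_tmul (x y z : H) :
    Wc (x ⊗ₜ[k] (y ⊗ₜ[k] z)) = S° y ⊗ₜ[k] ((S° (S° z)) ⊗ₜ[k] S° x) := by
  simp [Wc, TensorProduct.comm_tmul, TensorProduct.assoc_tmul]

/-- Key structural lemma: the `G` composite applied to `S a`. -/
lemma Gc_antipode (a : H) :
    (TensorProduct.assoc k H H H)
      ((LinearMap.rTensor H (TensorProduct.comm k H H).toLinearMap)
        ((TensorProduct.assoc k H H H).symm
          ((LinearMap.rTensor (H ⊗[k] H) (HopfAlgebra.antipode (R := k)))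
            ((LinearMap.lTensor H (Coalgebra.comul (R := k)))
              (Coalgebra.comul (HopfAlgebra.antipode (R := k) a))))))
    = Wc ((TensorProduct.assoc k H H H)
        ((LinearMap.rTensor H (Coalgebra.comul (R := k))) (Coalgebra.comul a))) := by
  classical
  choose s2 hs2 using fun K : H => TensorProduct.exists_finset (R := k) (Coalgebra.comul (R := k) K)
  have CA' : ∀ K : H, Coalgebra.comul (R := k) (S° K)
      = ∑ q ∈ s2 K, S° q.2 ⊗ₜ[k] S° q.1 := by
    intro K
    rw [my_comul_antipode, hs2 K]
    simp [map_sum]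
  have lhs_eq : (TensorProduct.assoc k H H H)
      ((LinearMap.rTensor H (TensorProduct.comm k H H).toLinearMap)
        ((TensorProduct.assoc k H H H).symm
          ((LinearMap.rTensor (H ⊗[k] H) (HopfAlgebra.antipode (R := k)))
            ((LinearMap.lTensor H (Coalgebra.comul (R := k)))
              (Coalgebra.comul (HopfAlgebra.antipode (R := k) a))))))
      = ∑ q ∈ s2 a, ∑ q' ∈ s2 q.1,
          S° q'.2 ⊗ₜ[k] ((S° (S° q.2)) ⊗ₜ[k] S° q'.1) := by
    simp only [CA']
    simp only [map_sum, LinearMap.lTensor_tmul, CA', TensorProduct.tmul_sum, map_sum,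
      LinearMap.rTensor_tmul, TensorProduct.assoc_symm_tmul, TensorProduct.comm_tmul,
      TensorProduct.assoc_tmul, LinearEquiv.coe_coe]
  have rhs_eq : Wc ((TensorProduct.assoc k H H H)
        ((LinearMap.rTensor H (Coalgebra.comul (R := k))) (Coalgebra.comul a)))
      = ∑ q ∈ s2 a, ∑ q' ∈ s2 q.1,
          S° q'.2 ⊗ₜ[k] ((S° (S° q.2)) ⊗ₜ[k] S° q'.1) := by
    rw [hs2 a]
    simp only [map_sum, LinearMap.rTensor_tmul]
    refine Finset.sum_congr rfl fun q _ => ?_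
    rw [hs2 q.1]
    simp only [TensorProduct.sum_tmul, map_sum, TensorProduct.assoc_tmul, Wc_tmul]
  rw [lhs_eq, rhs_eq]

end Part2

section Part3

variable {k : Type*} [CommRing k] {H : Type*} [Ring H] [HopfAlgebra k H]
variable {V : Type*} [AddCommGroup V] [Module k V]

local notation "S°" => (HopfAlgebra.antipode (R := k) (A := H))

lemma stmt14_key (actV : V →ₗ[k] H →ₗ[k] V) (u : V) (t : H) :
    (TensorProduct.map (TensorProduct.lift actV)
        (LinearMap.mul' k H
          ∘ₗ LinearMap.rTensor H (LinearMap.mul' k H)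
          ∘ₗ LinearMap.rTensor H (TensorProduct.comm k H H).toLinearMap
          ∘ₗ (TensorProduct.assoc k H H H).symm.toLinearMap)
      ∘ₗ (TensorProduct.tensorTensorTensorComm k V H H (H ⊗[k] H)).toLinearMap
      ∘ₗ LinearMap.lTensor (V ⊗[k] H)
          (((TensorProduct.assoc k H H H).toLinearMap
            ∘ₗ LinearMap.rTensor H (TensorProduct.comm k H H).toLinearMap
            ∘ₗ (TensorProduct.assoc k H H H).symm.toLinearMap
            ∘ₗ LinearMap.rTensor (H ⊗[k] H) (HopfAlgebra.antipode (R := k))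
            ∘ₗ LinearMap.lTensor H Coalgebra.comul
            ∘ₗ Coalgebra.comul) ∘ₗ HopfAlgebra.antipode (R := k)))
      ((TensorProduct.assoc k V H H).symm (u ⊗ₜ[k] Coalgebra.comul t))
    =
    (TensorProduct.map
        (TensorProduct.lift actV ∘ₗ LinearMap.lTensor V (HopfAlgebra.antipode (R := k)))
        (HopfAlgebra.antipode (R := k) ∘ₗ HopfAlgebra.antipode (R := k)))
      ((TensorProduct.assoc k V H H).symm (u ⊗ₜ[k] Coalgebra.comul t)) := by
  classical
  choose s2 hs2 using fun K : H => TensorProduct.exists_finset (R := k) (Coalgebra.comul (R := k) K)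
  -- the right-hand side map, as a linear map in the last slot
  set Θ : H →ₗ[k] V ⊗[k] H :=
    (TensorProduct.map
        (TensorProduct.lift actV ∘ₗ LinearMap.lTensor V (HopfAlgebra.antipode (R := k)))
        (HopfAlgebra.antipode (R := k) ∘ₗ HopfAlgebra.antipode (R := k)))
      ∘ₗ (TensorProduct.assoc k V H H).symm.toLinearMap
      ∘ₗ TensorProduct.mk k V (H ⊗[k] H) u
      ∘ₗ Coalgebra.comul with hΘ
  have Θ_eval : ∀ y : H, Θ y = ∑ c ∈ s2 y, (actV u (S° c.1)) ⊗ₜ[k] (S° (S° c.2)) := by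
    intro y
    simp only [hΘ, LinearMap.comp_apply, LinearEquiv.coe_coe, TensorProduct.mk_apply]
    rw [hs2 y]
    simp [TensorProduct.tmul_sum, map_sum, TensorProduct.assoc_symm_tmul]
  have rhs_eq : (TensorProduct.map
        (TensorProduct.lift actV ∘ₗ LinearMap.lTensor V (HopfAlgebra.antipode (R := k)))
        (HopfAlgebra.antipode (R := k) ∘ₗ HopfAlgebra.antipode (R := k)))
      ((TensorProduct.assoc k V H H).symm (u ⊗ₜ[k] Coalgebra.comul t)) = Θ t := by
    simp only [hΘ, LinearMap.comp_apply, LinearEquiv.coe_coe, TensorProduct.mk_apply]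
  rw [rhs_eq]
  -- regrouping of the fourfold comultiplication via coassociativity
  have regroup : ∑ j ∈ s2 t, j.1 ⊗ₜ[k]
        ((LinearMap.lTensor H (Coalgebra.comul (R := k))) (Coalgebra.comul j.2))
      = ∑ j ∈ s2 t, ∑ b ∈ s2 j.1, ∑ c ∈ s2 j.2,
          b.1 ⊗ₜ[k] (b.2 ⊗ₜ[k] (c.1 ⊗ₜ[k] c.2)) := by
    have e1 : ∑ j ∈ s2 t, j.1 ⊗ₜ[k]
        ((LinearMap.lTensor H (Coalgebra.comul (R := k))) (Coalgebra.comul j.2))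
        = (LinearMap.lTensor H (LinearMap.lTensor H (Coalgebra.comul (R := k))))
            ((LinearMap.lTensor H (Coalgebra.comul (R := k))) (Coalgebra.comul t)) := by
      rw [hs2 t]
      simp only [map_sum, LinearMap.lTensor_tmul]
    rw [e1, ← Coalgebra.coassoc_apply t, hs2 t]
    simp only [map_sum, LinearMap.rTensor_tmul]
    refine Finset.sum_congr rfl fun j _ => ?_
    rw [hs2 j.1]
    simp only [TensorProduct.sum_tmul, map_sum, TensorProduct.assoc_tmul,
      LinearMap.lTensor_tmul]
    refine Finset.sum_congr rfl fun b _ => ?_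
    rw [hs2 j.2]
    simp only [TensorProduct.tmul_sum, map_sum]
  -- transport map for the left-hand side
  set Ω : H ⊗[k] (H ⊗[k] (H ⊗[k] H)) →ₗ[k] V ⊗[k] H :=
    (TensorProduct.map (TensorProduct.lift actV)
        (LinearMap.mul' k H
          ∘ₗ LinearMap.rTensor H (LinearMap.mul' k H)
          ∘ₗ LinearMap.rTensor H (TensorProduct.comm k H H).toLinearMap
          ∘ₗ (TensorProduct.assoc k H H H).symm.toLinearMap))
      ∘ₗ (TensorProduct.tensorTensorTensorComm k V H H (H ⊗[k] H)).toLinearMap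
      ∘ₗ (TensorProduct.assoc k V H (H ⊗[k] (H ⊗[k] H))).symm.toLinearMap
      ∘ₗ TensorProduct.mk k V (H ⊗[k] (H ⊗[k] (H ⊗[k] H))) u
      ∘ₗ LinearMap.lTensor H Wc with hΩ
  have lhs_eq : (TensorProduct.map (TensorProduct.lift actV)
        (LinearMap.mul' k H
          ∘ₗ LinearMap.rTensor H (LinearMap.mul' k H)
          ∘ₗ LinearMap.rTensor H (TensorProduct.comm k H H).toLinearMap
          ∘ₗ (TensorProduct.assoc k H H H).symm.toLinearMap)
      ∘ₗ (TensorProduct.tensorTensorTensorComm k V H H (H ⊗[k] H)).toLinearMap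
      ∘ₗ LinearMap.lTensor (V ⊗[k] H)
          (((TensorProduct.assoc k H H H).toLinearMap
            ∘ₗ LinearMap.rTensor H (TensorProduct.comm k H H).toLinearMap
            ∘ₗ (TensorProduct.assoc k H H H).symm.toLinearMap
            ∘ₗ LinearMap.rTensor (H ⊗[k] H) (HopfAlgebra.antipode (R := k))
            ∘ₗ LinearMap.lTensor H Coalgebra.comul
            ∘ₗ Coalgebra.comul) ∘ₗ HopfAlgebra.antipode (R := k)))
      ((TensorProduct.assoc k V H H).symm (u ⊗ₜ[k] Coalgebra.comul t))
      = Ω (∑ j ∈ s2 t, j.1 ⊗ₜ[k]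
            ((LinearMap.lTensor H (Coalgebra.comul (R := k))) (Coalgebra.comul j.2))) := by
    rw [hs2 t]
    simp only [TensorProduct.tmul_sum, map_sum, TensorProduct.assoc_symm_tmul,
      LinearMap.comp_apply, LinearMap.lTensor_tmul, LinearEquiv.coe_coe]
    refine Finset.sum_congr rfl fun j _ => ?_
    rw [Gc_antipode j.2, Coalgebra.coassoc_apply j.2]
    simp only [hΩ, LinearMap.comp_apply, LinearEquiv.coe_coe, LinearMap.lTensor_tmul,
      TensorProduct.mk_apply, TensorProduct.assoc_symm_tmul]
  rw [lhs_eq, regroup]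
  -- now evaluate and collapse
  have hbcollapse : ∀ K : H, ∑ b ∈ s2 K, b.1 * S° b.2 = algebraMap k H (Coalgebra.counit K) := by
    intro K
    have h := HopfAlgebra.mul_antipode_lTensor_comul_apply (R := k) K
    rw [hs2 K] at h
    simpa [map_sum] using h
  have hcounit : ∑ j ∈ s2 t, Coalgebra.counit (R := k) j.1 • j.2 = t := by
    have h := congrArg (TensorProduct.lid k H) (Coalgebra.rTensor_counit_comul (R := k) t)
    rw [hs2 t, map_sum, map_sum] at h
    simpa using h
  calc Ω (∑ j ∈ s2 t, ∑ b ∈ s2 j.1, ∑ c ∈ s2 j.2, b.1 ⊗ₜ[k] (b.2 ⊗ₜ[k] (c.1 ⊗ₜ[k] c.2)))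
      = ∑ j ∈ s2 t, ∑ b ∈ s2 j.1, ∑ c ∈ s2 j.2,
          (actV u (S° c.1)) ⊗ₜ[k] (S° (S° c.2) * b.1 * S° b.2) := by
        simp only [map_sum]
        refine Finset.sum_congr rfl fun j _ => Finset.sum_congr rfl fun b _ =>
          Finset.sum_congr rfl fun c _ => ?_
        simp only [hΩ, LinearMap.comp_apply, LinearMap.lTensor_tmul, Wc_tmul,
          TensorProduct.mk_apply, LinearEquiv.coe_coe, TensorProduct.assoc_symm_tmul,
          TensorProduct.tensorTensorTensorComm_tmul, TensorProduct.map_tmul,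
          TensorProduct.lift.tmul, LinearMap.rTensor_tmul, TensorProduct.comm_tmul,
          LinearMap.mul'_apply]
    _ = ∑ j ∈ s2 t, Coalgebra.counit (R := k) j.1 • Θ j.2 := by
        refine Finset.sum_congr rfl fun j _ => ?_
        rw [Finset.sum_comm]
        rw [Θ_eval j.2, Finset.smul_sum]
        refine Finset.sum_congr rfl fun c _ => ?_
        have : ∑ b ∈ s2 j.1, (actV u (S° c.1)) ⊗ₜ[k] (S° (S° c.2) * b.1 * S° b.2)
            = (actV u (S° c.1)) ⊗ₜ[k] (S° (S° c.2) * ∑ b ∈ s2 j.1, b.1 * S° b.2) := by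
          rw [Finset.mul_sum, TensorProduct.tmul_sum]
          exact Finset.sum_congr rfl fun b _ => by rw [mul_assoc]
        rw [this, hbcollapse j.1, ← Algebra.commutes, ← Algebra.smul_def,
          TensorProduct.tmul_smul]
    _ = Θ (∑ j ∈ s2 t, Coalgebra.counit (R := k) j.1 • j.2) := by
        rw [map_sum]
        exact Finset.sum_congr rfl fun j _ => (map_smul Θ _ _).symm
    _ = Θ t := by rw [hcounit]

end Part3
/-- For a right-right Yetter–Drinfeld module `V` over `H`, the
map `θ_V(v) = v₍₀₎ ◁ S(v₍₁₎)` is colinear up to a twist by `S²`: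
`ρ(θ_V(v)) = θ_V(v₍₀₎) ⊗ S²(v₍₁₎)`. -/
theorem stmt_14
    {k : Type*} [CommRing k] {H : Type*} [Ring H] [HopfAlgebra k H]
    {V : Type*} [AddCommGroup V] [Module k V]
    -- the right `H`-action `(v, h) ↦ v ◁ h` as a bilinear map:
    (actV : V →ₗ[k] H →ₗ[k] V)
    (hactV1 : ∀ v : V, actV v 1 = v)
    (hactVmul : ∀ (v : V) (g h : H), actV v (g * h) = actV (actV v g) h)
    -- the right `H`-coaction, coassociative and counital:
    (ρV : V →ₗ[k] V ⊗[k] H)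
    (hcoassocV : ∀ v : V,
      (TensorProduct.map ρV LinearMap.id) (ρV v)
        = (TensorProduct.assoc k V H H).symm
            ((TensorProduct.map LinearMap.id Coalgebra.comul) (ρV v)))
    (hcounitV : ∀ v : V,
      (TensorProduct.rid k V)
        ((TensorProduct.map LinearMap.id Coalgebra.counit) (ρV v)) = v)
    -- the Yetter–Drinfeld condition `ρ(v ◁ h) = v₍₀₎ ◁ h₍₂₎ ⊗ S(h₍₁₎)·v₍₁₎·h₍₃₎`:
    (hYDV : ∀ (v : V) (h : H),
      ρV (actV v h)
        = (TensorProduct.map (TensorProduct.lift actV)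
            (LinearMap.mul' k H
              ∘ₗ LinearMap.rTensor H (LinearMap.mul' k H)
              ∘ₗ LinearMap.rTensor H (TensorProduct.comm k H H).toLinearMap
              ∘ₗ (TensorProduct.assoc k H H H).symm.toLinearMap))
          ((TensorProduct.tensorTensorTensorComm k V H H (H ⊗[k] H))
            ((ρV v) ⊗ₜ[k]
              (((TensorProduct.assoc k H H H).toLinearMap
                ∘ₗ LinearMap.rTensor H (TensorProduct.comm k H H).toLinearMap
                ∘ₗ (TensorProduct.assoc k H H H).symm.toLinearMap
                ∘ₗ LinearMap.rTensor (H ⊗[k] H) (HopfAlgebra.antipode (R := k))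
                ∘ₗ LinearMap.lTensor H Coalgebra.comul
                ∘ₗ Coalgebra.comul) h))))
    -- `θ_V(v) = v₍₀₎ ◁ S(v₍₁₎)`:
    (θV : V →ₗ[k] V)
    (hθV : θV = TensorProduct.lift actV
        ∘ₗ LinearMap.lTensor V (HopfAlgebra.antipode (R := k)) ∘ₗ ρV)
    :
    ∀ v : V,
      ρV (θV v)
        = (TensorProduct.map θV
            (HopfAlgebra.antipode (R := k) ∘ₗ HopfAlgebra.antipode (R := k))) (ρV v) := by
  classical
  intro v
  obtain ⟨s, hs⟩ := TensorProduct.exists_finset (R := k) (ρV v)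
  have hθ : ∀ x : V, θV x
      = TensorProduct.lift actV
          (LinearMap.lTensor V (HopfAlgebra.antipode (R := k)) (ρV x)) := by
    intro x; rw [hθV]; rfl
  have hθv : θV v = ∑ p ∈ s, actV p.1 (HopfAlgebra.antipode (R := k) p.2) := by
    rw [hθ v, hs]
    simp [map_sum]
  set Ψ : (V ⊗[k] H) ⊗[k] H →ₗ[k] V ⊗[k] H :=
    TensorProduct.map (TensorProduct.lift actV)
        (LinearMap.mul' k H
          ∘ₗ LinearMap.rTensor H (LinearMap.mul' k H)
          ∘ₗ LinearMap.rTensor H (TensorProduct.comm k H H).toLinearMap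
          ∘ₗ (TensorProduct.assoc k H H H).symm.toLinearMap)
      ∘ₗ (TensorProduct.tensorTensorTensorComm k V H H (H ⊗[k] H)).toLinearMap
      ∘ₗ LinearMap.lTensor (V ⊗[k] H)
          (((TensorProduct.assoc k H H H).toLinearMap
            ∘ₗ LinearMap.rTensor H (TensorProduct.comm k H H).toLinearMap
            ∘ₗ (TensorProduct.assoc k H H H).symm.toLinearMap
            ∘ₗ LinearMap.rTensor (H ⊗[k] H) (HopfAlgebra.antipode (R := k))
            ∘ₗ LinearMap.lTensor H Coalgebra.comul
            ∘ₗ Coalgebra.comul) ∘ₗ HopfAlgebra.antipode (R := k)) with hΨ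
  set Λ₂ : (V ⊗[k] H) ⊗[k] H →ₗ[k] V ⊗[k] H :=
    TensorProduct.map
        (TensorProduct.lift actV ∘ₗ LinearMap.lTensor V (HopfAlgebra.antipode (R := k)))
        (HopfAlgebra.antipode (R := k) ∘ₗ HopfAlgebra.antipode (R := k)) with hΛ
  have hC : ∑ p ∈ s, (ρV p.1) ⊗ₜ[k] p.2
      = ∑ p ∈ s, (TensorProduct.assoc k V H H).symm (p.1 ⊗ₜ[k] Coalgebra.comul p.2) := by
    have h := hcoassocV v
    rw [hs] at h
    simp only [map_sum, TensorProduct.map_tmul, LinearMap.id_coe, id_eq] at h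
    exact h
  calc ρV (θV v) = ∑ p ∈ s, ρV (actV p.1 (HopfAlgebra.antipode (R := k) p.2)) := by
        rw [hθv, map_sum]
    _ = ∑ p ∈ s, Ψ ((ρV p.1) ⊗ₜ[k] p.2) := by
        refine Finset.sum_congr rfl fun p _ => ?_
        rw [hYDV p.1 (HopfAlgebra.antipode (R := k) p.2), hΨ]
        simp only [LinearMap.comp_apply, LinearMap.lTensor_tmul, LinearEquiv.coe_coe]
    _ = ∑ p ∈ s, Ψ ((TensorProduct.assoc k V H H).symm (p.1 ⊗ₜ[k] Coalgebra.comul p.2)) := by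
        rw [← map_sum, hC, map_sum]
    _ = ∑ p ∈ s, Λ₂ ((TensorProduct.assoc k V H H).symm (p.1 ⊗ₜ[k] Coalgebra.comul p.2)) := by
        refine Finset.sum_congr rfl fun p _ => ?_
        rw [hΨ, hΛ]
        exact stmt14_key actV p.1 p.2
    _ = Λ₂ (∑ p ∈ s, (ρV p.1) ⊗ₜ[k] p.2) := by
        rw [hC, map_sum]
    _ = (TensorProduct.map θV
            (HopfAlgebra.antipode (R := k) ∘ₗ HopfAlgebra.antipode (R := k))) (ρV v) := by
        rw [hs, map_sum, map_sum]
        refine Finset.sum_congr rfl fun p _ => ?_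
        rw [hΛ]
        simp only [TensorProduct.map_tmul, LinearMap.comp_apply, LinearMap.lTensor_tmul,
          hθ p.1]
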